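/- Let g be convex and differentiable on ℝ^{K×N}, and f̃(Z, b) = g(Z + b·1ᵀ) + √(λ_W λ_H)·‖Z‖_* + (λ_b/2)‖b‖₂². Then (Z, b) is a global minimizer of f̃ if and only if ∇g(Z + b1ᵀ)·V = −√(λ_W λ_H)·U, ∇g(Z + b1ᵀ)ᵀ·U = −√(λ_W λ_H)·V, the operator norm ‖∇g(Z + b1ᵀ)‖ ≤ √(λ_W λ_H), and Σ_{i=1}^N [∇g(Z + b1ᵀ)]_i + λ_b·b = 0, where Z = UΣVᵀ is a compact SVD of Z. -/

import Mathlib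

open Matrix

attribute [local instance] Matrix.normedAddCommGroup Matrix.normedSpace

/-- The nuclear norm of a real matrix: the sum of its singular values. -/
noncomputable def nuclearNorm {K N : ℕ} (Z : Matrix (Fin K) (Fin N) ℝ) : ℝ :=
  ∑ i, Real.sqrt ((Matrix.isHermitian_conjTranspose_mul_self Z).eigenvalues i)

/-- The ℓ₂ operator norm of a matrix. -/
noncomputable def matOpNorm {K N : ℕ} (G : Matrix (Fin K) (Fin N) ℝ) : ℝ :=
  ‖LinearMap.toContinuousLinearMap (Matrix.toEuclideanLin G)‖

/-- The convex objective `f̃(Z,b) = g(Z + b·1ᵀ) + √(λ_W λ_H)‖Z‖_* + (λ_b/2)‖b‖₂²`. -/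
noncomputable def ftilde {K N : ℕ} (g : Matrix (Fin K) (Fin N) ℝ → ℝ) (lW lH lb : ℝ)
    (Z : Matrix (Fin K) (Fin N) ℝ) (b : Fin K → ℝ) : ℝ :=
  g (Z + Matrix.of fun i _ => b i) + Real.sqrt (lW * lH) * nuclearNorm Z +
    lb / 2 * ∑ i, (b i) ^ 2

namespace Stmt19
variable {K N m n p : ℕ}

noncomputable def em (M : Matrix (Fin m) (Fin n) ℝ) :
    EuclideanSpace ℝ (Fin n) →L[ℝ] EuclideanSpace ℝ (Fin m) :=
  LinearMap.toContinuousLinearMap (Matrix.toEuclideanLin M)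

lemma em_apply (M : Matrix (Fin m) (Fin n) ℝ) (x : EuclideanSpace ℝ (Fin n)) (k : Fin m) :
    em M x k = ∑ j, M k j * x j := by
  simp [em, Matrix.toEuclideanLin_apply, Matrix.mulVec, dotProduct]

lemma matOpNorm_eq (M : Matrix (Fin m) (Fin n) ℝ) : matOpNorm M = ‖em M‖ := rfl

lemma matOpNorm_nonneg (M : Matrix (Fin m) (Fin n) ℝ) : 0 ≤ matOpNorm M := norm_nonneg _

lemma inner_eq (x y : EuclideanSpace ℝ (Fin n)) :
    (inner ℝ x y : ℝ) = ∑ i, x i * y i := by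
  simp [PiLp.inner_apply, mul_comm]

lemma norm_em_le (M : Matrix (Fin m) (Fin n) ℝ) (x : EuclideanSpace ℝ (Fin n)) :
    ‖em M x‖ ≤ matOpNorm M * ‖x‖ := (em M).le_opNorm x

lemma matOpNorm_le {M : Matrix (Fin m) (Fin n) ℝ} {c : ℝ} (hc : 0 ≤ c)
    (h : ∀ x : EuclideanSpace ℝ (Fin n), ‖em M x‖ ≤ c * ‖x‖) : matOpNorm M ≤ c :=
  ContinuousLinearMap.opNorm_le_bound _ hc h

lemma em_neg (M : Matrix (Fin m) (Fin n) ℝ) : em (-M) = -(em M) := by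
  ext x k
  simp [em_apply, Finset.sum_neg_distrib]

lemma matOpNorm_neg (M : Matrix (Fin m) (Fin n) ℝ) : matOpNorm (-M) = matOpNorm M := by
  rw [matOpNorm_eq, matOpNorm_eq, em_neg, norm_neg]

lemma em_mul (A : Matrix (Fin m) (Fin n) ℝ) (B : Matrix (Fin n) (Fin p) ℝ)
    (x : EuclideanSpace ℝ (Fin p)) : em (A * B) x = em A (em B x) := by
  ext k
  simp only [em_apply, Matrix.mul_apply, Finset.sum_mul, Finset.mul_sum, mul_assoc]
  rw [Finset.sum_comm]

lemma inner_em_transpose (A : Matrix (Fin m) (Fin n) ℝ) (x : EuclideanSpace ℝ (Fin m))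
    (y : EuclideanSpace ℝ (Fin n)) : (inner ℝ (em Aᵀ x) y : ℝ) = inner ℝ x (em A y) := by
  simp only [inner_eq, em_apply, Matrix.transpose_apply, Finset.sum_mul, Finset.mul_sum]
  rw [Finset.sum_comm]
  congr 1; ext k; congr 1; ext j; ring

/-- Frobenius inner ℝ product -/
def ip (B A : Matrix (Fin K) (Fin N) ℝ) : ℝ := ∑ k, ∑ j, B k j * A k j

noncomputable def rowE (M : Matrix (Fin m) (Fin n) ℝ) (k : Fin m) : EuclideanSpace ℝ (Fin n) :=
  (WithLp.equiv 2 _).symm (M k)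

lemma rowE_apply (M : Matrix (Fin m) (Fin n) ℝ) (k : Fin m) (j : Fin n) :
    rowE M k j = M k j := rfl

lemma em_row_inner (M : Matrix (Fin m) (Fin n) ℝ) (x : EuclideanSpace ℝ (Fin n)) (k : Fin m) :
    em M x k = inner ℝ (rowE M k) x := by
  rw [em_apply, inner_eq]; rfl

lemma ip_eq_rows (B A : Matrix (Fin K) (Fin N) ℝ) :
    ip B A = ∑ k, (inner ℝ (rowE B k) (rowE A k) : ℝ) := by
  simp [ip, inner_eq, rowE_apply]

lemma frob_onb (v : OrthonormalBasis (Fin N) ℝ (EuclideanSpace ℝ (Fin N)))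
    (B A : Matrix (Fin K) (Fin N) ℝ) :
    ip B A = ∑ i, (inner ℝ (em B (v i)) (em A (v i)) : ℝ) := by
  rw [ip_eq_rows]
  have : ∀ i, (inner ℝ (em B (v i)) (em A (v i)) : ℝ)
      = ∑ k, (inner ℝ (rowE B k) (v i) : ℝ) * (inner ℝ (v i) (rowE A k) : ℝ) := by
    intro i
    rw [inner_eq]
    congr 1; ext k
    rw [em_row_inner, em_row_inner, real_inner_comm (rowE A k)]
  simp only [this]
  rw [Finset.sum_comm]
  congr 1; ext k
  exact (v.sum_inner_mul_inner (rowE B k) (rowE A k)).symm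


lemma esum_apply {q : ℕ} (w : Fin q → EuclideanSpace ℝ (Fin m)) (k : Fin m) :
    (∑ i, w i) k = ∑ i, w i k := by
  induction (Finset.univ : Finset (Fin q)) using Finset.induction_on with
  | empty => rfl
  | insert a s h ih => rw [Finset.sum_insert h, Finset.sum_insert h, ← ih]; rfl

lemma eig_congr {q : ℕ} {M₁ M₂ : Matrix (Fin q) (Fin q) ℝ} (h₁ : M₁.IsHermitian)
    (h₂ : M₂.IsHermitian) (h : M₁ = M₂) : h₁.eigenvalues = h₂.eigenvalues := by
  subst h; rfl

lemma inner_em_em (A : Matrix (Fin m) (Fin n) ℝ) (x y : EuclideanSpace ℝ (Fin n)) :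
    (inner ℝ (em A x) (em A y) : ℝ) = inner ℝ (em (Aᵀ * A) y) x := by
  rw [em_mul, inner_em_transpose, real_inner_comm]

section Spectral
variable (A : Matrix (Fin K) (Fin N) ℝ)

lemma lam_nonneg (i : Fin N) : 0 ≤ (Matrix.isHermitian_conjTranspose_mul_self A).eigenvalues i :=
  (Matrix.posSemidef_conjTranspose_mul_self A).eigenvalues_nonneg i

lemma em_gram (i : Fin N) (x : EuclideanSpace ℝ (Fin N)) :
    (inner ℝ (em A x) (em A ((Matrix.isHermitian_conjTranspose_mul_self A).eigenvectorBasis i)) : ℝ)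
    = (Matrix.isHermitian_conjTranspose_mul_self A).eigenvalues i *
      inner ℝ ((Matrix.isHermitian_conjTranspose_mul_self A).eigenvectorBasis i) x := by
  set hH := Matrix.isHermitian_conjTranspose_mul_self A
  rw [inner_em_em]
  have hmv := hH.mulVec_eigenvectorBasis i
  have hcoord : ∀ k, em (Aᵀ * A) (hH.eigenvectorBasis i) k
      = hH.eigenvalues i * hH.eigenvectorBasis i k := by
    intro k
    have h2 := congrFun hmv k
    simpa [em_apply, Matrix.mulVec, dotProduct, Matrix.mul_apply,
      Matrix.conjTranspose_apply, Matrix.transpose_apply] using h2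
  rw [inner_eq, inner_eq, Finset.mul_sum]
  refine Finset.sum_congr rfl fun k _ => ?_
  rw [hcoord k]; ring

lemma gram_ite (i j : Fin N) :
    (inner ℝ (em A ((Matrix.isHermitian_conjTranspose_mul_self A).eigenvectorBasis i))
      (em A ((Matrix.isHermitian_conjTranspose_mul_self A).eigenvectorBasis j)) : ℝ)
    = if i = j then (Matrix.isHermitian_conjTranspose_mul_self A).eigenvalues j else 0 := by
  set hH := Matrix.isHermitian_conjTranspose_mul_self A
  rw [em_gram]
  rw [orthonormal_iff_ite.mp hH.eigenvectorBasis.orthonormal]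
  rcases eq_or_ne i j with rfl | h
  · simp
  · simp [h, Ne.symm h]

lemma norm_em_eig (i : Fin N) :
    ‖em A ((Matrix.isHermitian_conjTranspose_mul_self A).eigenvectorBasis i)‖
    = Real.sqrt ((Matrix.isHermitian_conjTranspose_mul_self A).eigenvalues i) := by
  have h : (inner ℝ (em A ((Matrix.isHermitian_conjTranspose_mul_self A).eigenvectorBasis i))
      (em A ((Matrix.isHermitian_conjTranspose_mul_self A).eigenvectorBasis i)) : ℝ)
      = (Matrix.isHermitian_conjTranspose_mul_self A).eigenvalues i := by
    rw [gram_ite A i i, if_pos rfl]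
  rw [real_inner_self_eq_norm_mul_norm] at h
  rw [← h, Real.sqrt_mul_self (norm_nonneg _)]

lemma ip_le (B : Matrix (Fin K) (Fin N) ℝ) : ip B A ≤ matOpNorm B * nuclearNorm A := by
  set hH := Matrix.isHermitian_conjTranspose_mul_self A
  rw [frob_onb hH.eigenvectorBasis]
  have hnn : nuclearNorm A = ∑ i, Real.sqrt (hH.eigenvalues i) := rfl
  rw [hnn, Finset.mul_sum]
  refine Finset.sum_le_sum fun i _ => ?_
  calc (inner ℝ (em B (hH.eigenvectorBasis i)) (em A (hH.eigenvectorBasis i)) : ℝ)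
      ≤ ‖em B (hH.eigenvectorBasis i)‖ * ‖em A (hH.eigenvectorBasis i)‖ := real_inner_le_norm _ _
    _ ≤ (matOpNorm B * ‖hH.eigenvectorBasis i‖) * Real.sqrt (hH.eigenvalues i) := by
        rw [norm_em_eig]
        exact mul_le_mul_of_nonneg_right (norm_em_le _ _) (Real.sqrt_nonneg _)
    _ = matOpNorm B * Real.sqrt (hH.eigenvalues i) := by
        rw [hH.eigenvectorBasis.orthonormal.1 i, mul_one]

lemma ip_attain : ∃ B : Matrix (Fin K) (Fin N) ℝ,
    matOpNorm B ≤ 1 ∧ ip B A = nuclearNorm A := by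
  classical
  set hH := Matrix.isHermitian_conjTranspose_mul_self A with hHdef
  set v := hH.eigenvectorBasis with hvdef
  set lam := hH.eigenvalues with hlamdef
  set c : Fin N → ℝ := fun i => if lam i = 0 then 0 else (Real.sqrt (lam i))⁻¹ with hcdef
  have hclam : ∀ i, c i * lam i = Real.sqrt (lam i) := by
    intro i
    by_cases h : lam i = 0
    · simp [hcdef, h]
    · have hlt : 0 < lam i := lt_of_le_of_ne (lam_nonneg A i) (Ne.symm h)
      have hs : Real.sqrt (lam i) ≠ 0 := ne_of_gt (Real.sqrt_pos.2 hlt)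
      simp only [hcdef, if_neg h]
      rw [inv_mul_eq_iff_eq_mul₀ hs]
      exact (Real.mul_self_sqrt hlt.le).symm
  set B : Matrix (Fin K) (Fin N) ℝ :=
    Matrix.of (fun k j => ∑ i, c i * (em A (v i) k) * (v i j)) with hBdef
  have hemB : ∀ x : EuclideanSpace ℝ (Fin N),
      em B x = ∑ i, (c i * (inner ℝ (v i) x : ℝ)) • em A (v i) := by
    intro x
    ext k
    rw [esum_apply]
    trans (∑ i, ∑ j, c i * (em A (v i) k) * (v i j) * x j)
    · rw [em_apply]
      simp only [hBdef, Matrix.of_apply, Finset.sum_mul]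
      rw [Finset.sum_comm]
    · refine Finset.sum_congr rfl fun i _ => ?_
      rw [PiLp.smul_apply, smul_eq_mul, inner_eq, Finset.mul_sum, Finset.sum_mul]
      refine Finset.sum_congr rfl fun j _ => ?_
      ring
  have hBB : ∀ x : EuclideanSpace ℝ (Fin N),
      (inner ℝ (em B x) (em B x) : ℝ) = ∑ i, (c i * (inner ℝ (v i) x : ℝ))^2 * lam i := by
    intro x
    rw [hemB, sum_inner]
    refine Finset.sum_congr rfl fun i _ => ?_
    rw [real_inner_smul_left, inner_sum]
    have hterm : ∀ j, (inner ℝ (em A (v i)) ((c j * (inner ℝ (v j) x : ℝ)) • em A (v j)) : ℝ)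
        = (c j * (inner ℝ (v j) x : ℝ)) * (if i = j then lam j else 0) := by
      intro j
      rw [real_inner_smul_right, gram_ite]
    simp only [hterm, mul_ite, mul_zero, Finset.sum_ite_eq, Finset.mem_univ, if_pos]
    ring
  have hnorm : matOpNorm B ≤ 1 := by
    refine matOpNorm_le zero_le_one fun x => ?_
    have h1 : (inner ℝ (em B x) (em B x) : ℝ) ≤ (inner ℝ x x : ℝ) := by
      rw [hBB]
      have parseval : ∑ i, (inner ℝ x (v i) : ℝ) * (inner ℝ (v i) x : ℝ) = (inner ℝ x x : ℝ) :=
        v.sum_inner_mul_inner x x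
      calc ∑ i, (c i * (inner ℝ (v i) x : ℝ))^2 * lam i
          ≤ ∑ i, (inner ℝ (v i) x : ℝ)^2 := by
            refine Finset.sum_le_sum fun i _ => ?_
            by_cases h : lam i = 0
            · simp only [hcdef, if_pos h]
              simp only [zero_mul, ne_eq, OfNat.ofNat_ne_zero, not_false_eq_true, zero_pow, h,
                mul_zero]
              positivity
            · have hlt : 0 < lam i := lt_of_le_of_ne (lam_nonneg A i) (Ne.symm h)
              have hs : Real.sqrt (lam i) ≠ 0 := ne_of_gt (Real.sqrt_pos.2 hlt)
              simp only [hcdef, if_neg h]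
              have h2 : Real.sqrt (lam i) ^ 2 = lam i := Real.sq_sqrt hlt.le
              rw [mul_pow, inv_pow, h2, mul_comm ((lam i)⁻¹) _, mul_assoc,
                inv_mul_cancel₀ h, mul_one]
        _ = (inner ℝ x x : ℝ) := by
            rw [← parseval]
            refine Finset.sum_congr rfl fun i _ => ?_
            rw [real_inner_comm x (v i)]; ring
    rw [real_inner_self_eq_norm_mul_norm, real_inner_self_eq_norm_mul_norm] at h1
    nlinarith [norm_nonneg (em B x), norm_nonneg x]
  refine ⟨B, hnorm, ?_⟩
  rw [frob_onb v]
  have hnn : nuclearNorm A = ∑ i, Real.sqrt (lam i) := rfl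
  rw [hnn]
  refine Finset.sum_congr rfl fun i _ => ?_
  rw [hemB, sum_inner]
  have horth := orthonormal_iff_ite.mp v.orthonormal
  have hterm : ∀ j, (inner ℝ ((c j * (inner ℝ (v j) (v i) : ℝ)) • em A (v j)) (em A (v i)) : ℝ)
      = (c j * (if j = i then 1 else 0)) * (if j = i then lam i else 0) := by
    intro j
    rw [real_inner_smul_left, gram_ite, horth]
  simp only [hterm, mul_ite, mul_zero, mul_one, ite_mul, zero_mul, Finset.sum_ite_eq',
    Finset.mem_univ, if_pos]
  exact hclam i
end Spectral


section IpAlgebra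
variable (B A C : Matrix (Fin K) (Fin N) ℝ)

lemma ip_add_right : ip B (A + C) = ip B A + ip B C := by
  simp [ip, Matrix.add_apply, mul_add, Finset.sum_add_distrib]

lemma ip_sub_right : ip B (A - C) = ip B A - ip B C := by
  simp [ip, Matrix.sub_apply, mul_sub, Finset.sum_sub_distrib]

lemma ip_smul_right (t : ℝ) : ip B (t • A) = t * ip B A := by
  simp [ip, Matrix.smul_apply, Finset.mul_sum, smul_eq_mul]
  congr 1; ext k; congr 1; ext j; ring

lemma ip_zero_right : ip B (0 : Matrix (Fin K) (Fin N) ℝ) = 0 := by simp [ip]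

lemma ip_neg_left : ip (-B) A = - ip B A := by
  simp [ip, Matrix.neg_apply, Finset.sum_neg_distrib]

end IpAlgebra

lemma nn_nonneg (A : Matrix (Fin K) (Fin N) ℝ) : 0 ≤ nuclearNorm A :=
  Finset.sum_nonneg fun i _ => Real.sqrt_nonneg _

lemma nn_zero : nuclearNorm (0 : Matrix (Fin K) (Fin N) ℝ) = 0 := by
  obtain ⟨B, _, h2⟩ := ip_attain (0 : Matrix (Fin K) (Fin N) ℝ)
  rw [← h2, ip_zero_right]

lemma ip_le_nn {B A : Matrix (Fin K) (Fin N) ℝ} (hB : matOpNorm B ≤ 1) :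
    ip B A ≤ nuclearNorm A :=
  le_trans (ip_le A B) (by
    calc matOpNorm B * nuclearNorm A ≤ 1 * nuclearNorm A :=
          mul_le_mul_of_nonneg_right hB (nn_nonneg A)
      _ = nuclearNorm A := one_mul _)

lemma nn_smul {t : ℝ} (ht : 0 ≤ t) (A : Matrix (Fin K) (Fin N) ℝ) :
    nuclearNorm (t • A) = t * nuclearNorm A := by
  obtain ⟨B1, hB1, h1⟩ := ip_attain (t • A)
  obtain ⟨B2, hB2, h2⟩ := ip_attain A
  refine le_antisymm ?_ ?_
  · rw [← h1, ip_smul_right]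
    exact mul_le_mul_of_nonneg_left (ip_le_nn hB1) ht
  · calc t * nuclearNorm A = ip B2 (t • A) := by rw [ip_smul_right, h2]
      _ ≤ nuclearNorm (t • A) := ip_le_nn hB2

lemma nn_combo {t : ℝ} (ht0 : 0 ≤ t) (ht1 : t ≤ 1) (Z A : Matrix (Fin K) (Fin N) ℝ) :
    nuclearNorm ((1 - t) • Z + t • A) ≤ (1 - t) * nuclearNorm Z + t * nuclearNorm A := by
  obtain ⟨B, hB, h⟩ := ip_attain ((1 - t) • Z + t • A)
  rw [← h, ip_add_right, ip_smul_right, ip_smul_right]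
  have h1 : ip B Z ≤ nuclearNorm Z := ip_le_nn hB
  have h2 : ip B A ≤ nuclearNorm A := ip_le_nn hB
  have ht' : 0 ≤ 1 - t := by linarith
  nlinarith

lemma nn_neg (A : Matrix (Fin K) (Fin N) ℝ) : nuclearNorm (-A) = nuclearNorm A := by
  have hmm : (-A)ᴴ * (-A) = Aᴴ * A := by simp
  unfold nuclearNorm
  refine Finset.sum_congr rfl fun i _ => ?_
  rw [congrFun (eig_congr (Matrix.isHermitian_conjTranspose_mul_self (-A))
    (Matrix.isHermitian_conjTranspose_mul_self A) hmm) i]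

lemma ip_rank_one (B : Matrix (Fin K) (Fin N) ℝ) (x : EuclideanSpace ℝ (Fin K))
    (y : EuclideanSpace ℝ (Fin N)) :
    ip B (Matrix.of fun k j => x k * y j) = inner ℝ x (em B y) := by
  rw [inner_eq]
  refine Finset.sum_congr rfl fun k _ => ?_
  rw [em_apply, Finset.mul_sum]
  refine Finset.sum_congr rfl fun j _ => ?_
  simp only [Matrix.of_apply]; ring

lemma nn_rank_one_le (x : EuclideanSpace ℝ (Fin K)) (y : EuclideanSpace ℝ (Fin N)) :
    nuclearNorm (Matrix.of fun k j => x k * y j) ≤ ‖x‖ * ‖y‖ := by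
  obtain ⟨B, hB, h⟩ := ip_attain (Matrix.of fun k j => x k * y j)
  rw [← h, ip_rank_one]
  calc (inner ℝ x (em B y) : ℝ) ≤ ‖x‖ * ‖em B y‖ := real_inner_le_norm _ _
    _ ≤ ‖x‖ * (1 * ‖y‖) := by
        refine mul_le_mul_of_nonneg_left ?_ (norm_nonneg _)
        calc ‖em B y‖ ≤ matOpNorm B * ‖y‖ := norm_em_le _ _
          _ ≤ 1 * ‖y‖ := mul_le_mul_of_nonneg_right hB (norm_nonneg _)
    _ = ‖x‖ * ‖y‖ := by ring

section SVD
variable {r : ℕ}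

noncomputable def colE (M : Matrix (Fin m) (Fin n) ℝ) (i : Fin n) : EuclideanSpace ℝ (Fin m) :=
  (WithLp.equiv 2 _).symm (fun k => M k i)

lemma colE_apply (M : Matrix (Fin m) (Fin n) ℝ) (i : Fin n) (k : Fin m) :
    colE M i k = M k i := rfl

lemma em_one (x : EuclideanSpace ℝ (Fin n)) : em (1 : Matrix (Fin n) (Fin n) ℝ) x = x := by
  ext k
  rw [em_apply]
  simp [Matrix.one_apply]

lemma em_single (M : Matrix (Fin m) (Fin n) ℝ) (j : Fin n) :
    em M (EuclideanSpace.single j 1) = colE M j := by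
  ext k
  rw [em_apply, colE_apply]
  simp [EuclideanSpace.single_apply]

lemma norm_em_isometry {M : Matrix (Fin m) (Fin n) ℝ} (h : Mᵀ * M = 1)
    (x : EuclideanSpace ℝ (Fin n)) : ‖em M x‖ = ‖x‖ := by
  have h1 : (inner ℝ (em M x) (em M x) : ℝ) = inner ℝ x x := by
    rw [inner_em_em, h, em_one]
  rw [real_inner_self_eq_norm_mul_norm, real_inner_self_eq_norm_mul_norm] at h1
  nlinarith [norm_nonneg (em M x), norm_nonneg x]

lemma norm_em_transpose_le {M : Matrix (Fin m) (Fin n) ℝ} (h : Mᵀ * M = 1)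
    (x : EuclideanSpace ℝ (Fin m)) : ‖em Mᵀ x‖ ≤ ‖x‖ := by
  set y := em Mᵀ x with hy
  have h1 : (inner ℝ (em Mᵀ x) y : ℝ) = inner ℝ x (em M y) := inner_em_transpose M x y
  rw [← hy] at h1
  have h2 : ‖y‖ * ‖y‖ ≤ ‖x‖ * ‖y‖ := by
    rw [← real_inner_self_eq_norm_mul_norm, h1]
    calc (inner ℝ x (em M y) : ℝ) ≤ ‖x‖ * ‖em M y‖ := real_inner_le_norm _ _
      _ = ‖x‖ * ‖y‖ := by rw [norm_em_isometry h]
  rcases eq_or_lt_of_le (norm_nonneg y) with h3 | h3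
  · rw [← h3]; exact norm_nonneg x
  · exact le_of_mul_le_mul_right h2 h3

lemma norm_colE {M : Matrix (Fin m) (Fin n) ℝ} (h : Mᵀ * M = 1) (i : Fin n) :
    ‖colE M i‖ = 1 := by
  rw [← em_single, norm_em_isometry h, EuclideanSpace.norm_single]
  simp

lemma svd_entry (U : Matrix (Fin K) (Fin r) ℝ) (V : Matrix (Fin N) (Fin r) ℝ) (σ : Fin r → ℝ)
    (k : Fin K) (j : Fin N) :
    (U * Matrix.diagonal σ * Vᵀ) k j = ∑ i, U k i * σ i * V j i := by
  rw [Matrix.mul_apply]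
  refine Finset.sum_congr rfl fun i _ => ?_
  rw [Matrix.mul_diagonal, Matrix.transpose_apply]

lemma ip_svd (B : Matrix (Fin K) (Fin N) ℝ) (U : Matrix (Fin K) (Fin r) ℝ)
    (V : Matrix (Fin N) (Fin r) ℝ) (σ : Fin r → ℝ) :
    ip B (U * Matrix.diagonal σ * Vᵀ)
      = ∑ i, σ i * (inner ℝ (colE U i) (em B (colE V i)) : ℝ) := by
  have hterm : ∀ i, σ i * (inner ℝ (colE U i) (em B (colE V i)) : ℝ)
      = ∑ k, ∑ j, B k j * (U k i * σ i * V j i) := by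
    intro i
    rw [inner_eq, Finset.mul_sum]
    refine Finset.sum_congr rfl fun k _ => ?_
    rw [em_apply, colE_apply, Finset.mul_sum, Finset.mul_sum]
    refine Finset.sum_congr rfl fun j _ => ?_
    rw [colE_apply]; ring
  simp only [hterm]
  rw [Finset.sum_comm]
  refine Finset.sum_congr rfl fun k _ => ?_
  rw [Finset.sum_comm]
  refine Finset.sum_congr rfl fun j _ => ?_
  rw [svd_entry, Finset.mul_sum]

lemma em_vt_col {V : Matrix (Fin N) (Fin r) ℝ} (hV : Vᵀ * V = 1) (i : Fin r) :
    em Vᵀ (colE V i) = EuclideanSpace.single i 1 := by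
  ext j'
  rw [em_apply]
  have : ∑ j, Vᵀ j' j * colE V i j = (Vᵀ * V) j' i := by
    rw [Matrix.mul_apply]
    exact Finset.sum_congr rfl fun j _ => rfl
  rw [this, hV]
  simp [Matrix.one_apply, EuclideanSpace.single_apply, eq_comm]

lemma nn_svd {U : Matrix (Fin K) (Fin r) ℝ} {V : Matrix (Fin N) (Fin r) ℝ} {σ : Fin r → ℝ}
    (hU : Uᵀ * U = 1) (hV : Vᵀ * V = 1) (hσ : ∀ i, 0 ≤ σ i) :
    nuclearNorm (U * Matrix.diagonal σ * Vᵀ) = ∑ i, σ i := by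
  refine le_antisymm ?_ ?_
  · obtain ⟨B, hB, h⟩ := ip_attain (U * Matrix.diagonal σ * Vᵀ)
    rw [← h, ip_svd]
    refine Finset.sum_le_sum fun i _ => ?_
    have hb : (inner ℝ (colE U i) (em B (colE V i)) : ℝ) ≤ 1 := by
      calc (inner ℝ (colE U i) (em B (colE V i)) : ℝ)
          ≤ ‖colE U i‖ * ‖em B (colE V i)‖ := real_inner_le_norm _ _
        _ ≤ 1 * (matOpNorm B * ‖colE V i‖) := by
            rw [norm_colE hU]
            exact mul_le_mul_of_nonneg_left (norm_em_le _ _) zero_le_one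
        _ = matOpNorm B := by rw [norm_colE hV]; ring
        _ ≤ 1 := hB
    calc σ i * (inner ℝ (colE U i) (em B (colE V i)) : ℝ) ≤ σ i * 1 :=
          mul_le_mul_of_nonneg_left hb (hσ i)
      _ = σ i := mul_one _
  · have hB0 : matOpNorm (U * Vᵀ) ≤ 1 := by
      refine matOpNorm_le zero_le_one fun x => ?_
      rw [em_mul, norm_em_isometry hU, one_mul]
      exact norm_em_transpose_le hV x
    have hip : ip (U * Vᵀ) (U * Matrix.diagonal σ * Vᵀ) = ∑ i, σ i := by
      rw [ip_svd]
      refine Finset.sum_congr rfl fun i _ => ?_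
      rw [em_mul, em_vt_col hV, em_single]
      have : (inner ℝ (colE U i) (colE U i) : ℝ) = 1 := by
        rw [real_inner_self_eq_norm_mul_norm, norm_colE hU, mul_one]
      rw [this, mul_one]
    calc ∑ i, σ i = ip (U * Vᵀ) (U * Matrix.diagonal σ * Vᵀ) := hip.symm
      _ ≤ nuclearNorm (U * Matrix.diagonal σ * Vᵀ) := ip_le_nn hB0

end SVD


section Calculus

lemma clm_expand (φ : Matrix (Fin K) (Fin N) ℝ →L[ℝ] ℝ) (D : Matrix (Fin K) (Fin N) ℝ) :
    φ D = ∑ k, ∑ j, D k j * φ (Matrix.single k j 1) := by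
  conv_lhs => rw [Matrix.matrix_eq_sum_single D]
  rw [map_sum]
  refine Finset.sum_congr rfl fun k _ => ?_
  rw [map_sum]
  refine Finset.sum_congr rfl fun j _ => ?_
  have : Matrix.single k j (D k j) = D k j • Matrix.single k j 1 := by
    rw [Matrix.smul_single, smul_eq_mul, mul_one]
  rw [this, _root_.map_smul, smul_eq_mul]

variable {g : Matrix (Fin K) (Fin N) ℝ → ℝ}

lemma hasDerivAt_path (hgdiff : Differentiable ℝ g) (X D : Matrix (Fin K) (Fin N) ℝ) :
    HasDerivAt (fun t : ℝ => g (X + t • D)) (fderiv ℝ g X D) 0 := by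
  have hpath : HasDerivAt (fun t : ℝ => X + t • D) D 0 := by
    have h := ((hasDerivAt_id (0 : ℝ)).smul_const D).const_add X
    simp only [id_eq, one_smul] at h
    exact h
  have h0 : X + (0 : ℝ) • D = X := by simp
  have hcomp := (hgdiff (X + (0 : ℝ) • D)).hasFDerivAt.comp_hasDerivAt 0 hpath
  rw [h0] at hcomp
  exact hcomp

lemma convexOn_path (hgconv : ConvexOn ℝ Set.univ g) (X D : Matrix (Fin K) (Fin N) ℝ) :
    ConvexOn ℝ Set.univ (fun t : ℝ => g (X + t • D)) := by
  refine ⟨convex_univ, ?_⟩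
  intro a _ b _ μ ν hμ hν hμν
  simp only [smul_eq_mul]
  have harg : X + (μ * a + ν * b) • D = μ • (X + a • D) + ν • (X + b • D) := by
    ext k j
    simp only [Matrix.add_apply, Matrix.smul_apply, smul_eq_mul]
    linear_combination (X k j) * hμν.symm
  rw [harg]
  exact hgconv.2 (Set.mem_univ _) (Set.mem_univ _) hμ hν hμν

lemma grad_ineq (hgconv : ConvexOn ℝ Set.univ g) (hgdiff : Differentiable ℝ g)
    (X Y : Matrix (Fin K) (Fin N) ℝ) :
    g X + fderiv ℝ g X (Y - X) ≤ g Y := by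
  have hconv1 := convexOn_path hgconv X (Y - X)
  have hd := hasDerivAt_path hgdiff X (Y - X)
  have hs := hconv1.le_slope_of_hasDerivAt (Set.mem_univ (0 : ℝ)) (Set.mem_univ (1 : ℝ))
    zero_lt_one hd
  rw [slope_def_field] at hs
  simp only [zero_smul, add_zero, one_smul] at hs
  have h1 : X + (Y - X) = Y := by abel
  rw [h1] at hs
  have : (g Y - g X) / (1 - 0) = g Y - g X := by norm_num
  rw [this] at hs
  linarith

lemma deriv_ge_of_secant {φ : ℝ → ℝ} {d c : ℝ} (hφ : HasDerivAt φ d 0)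
    (h : ∀ t ∈ Set.Ioc (0 : ℝ) 1, c * t ≤ φ t - φ 0) : c ≤ d := by
  have htend := hasDerivAt_iff_tendsto_slope.1 hφ
  have htend2 : Filter.Tendsto (slope φ 0) (nhdsWithin 0 (Set.Ioi 0)) (nhds d) :=
    htend.mono_left (nhdsWithin_mono 0 (fun t ht => ne_of_gt ht))
  refine ge_of_tendsto htend2 ?_
  have hmem : Set.Ioc (0 : ℝ) 1 ∈ nhdsWithin (0 : ℝ) (Set.Ioi 0) :=
    Ioc_mem_nhdsGT_of_mem ⟨le_refl 0, zero_lt_one⟩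
  filter_upwards [hmem] with t ht
  have ht0 : 0 < t := ht.1
  rw [slope_def_field, le_div_iff₀ (by simpa using ht0)]
  simpa using h t ht

end Calculus


lemma col_sq_sum {q : ℕ} {M : Matrix (Fin m) (Fin q) ℝ} (h : Mᵀ * M = 1) (i : Fin q) :
    ∑ k, M k i * M k i = 1 := by
  have h2 := congrFun (congrFun h i) i
  rw [Matrix.mul_apply] at h2
  simp only [Matrix.transpose_apply, Matrix.one_apply_eq] at h2
  exact h2

end Stmt19

open Stmt19

set_option maxHeartbeats 2000000 in
/-- Optimality condition for the convex program: with `g` convex differentiable,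
`G = ∇g(Z + b1ᵀ)`, and `Z = U Σ Vᵀ` a compact SVD of `Z`, the pair `(Z, b)` is a global
minimizer of `f̃` iff `G V = −√(λ_W λ_H) U`, `Gᵀ U = −√(λ_W λ_H) V`,
`‖G‖ ≤ √(λ_W λ_H)` (operator norm), and `∑ᵢ Gᵢ + λ_b b = 0` (column sums). -/
theorem stmt19 {K N r : ℕ} (g : Matrix (Fin K) (Fin N) ℝ → ℝ)
    (hgconv : ConvexOn ℝ Set.univ g) (hgdiff : Differentiable ℝ g)
    (lW lH lb : ℝ) (hlW : 0 < lW) (hlH : 0 < lH) (hlb : 0 < lb)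
    (Z : Matrix (Fin K) (Fin N) ℝ) (b : Fin K → ℝ)
    (U : Matrix (Fin K) (Fin r) ℝ) (V : Matrix (Fin N) (Fin r) ℝ) (σ : Fin r → ℝ)
    (hU : Uᵀ * U = 1) (hV : Vᵀ * V = 1) (hσ : ∀ i, 0 < σ i)
    (hZ : Z = U * Matrix.diagonal σ * Vᵀ)
    (G : Matrix (Fin K) (Fin N) ℝ)
    (hG : ∀ i j, G i j =
      fderiv ℝ g (Z + Matrix.of fun i' _ => b i') (Matrix.single i j 1)) :
    (∀ (Z' : Matrix (Fin K) (Fin N) ℝ) (b' : Fin K → ℝ),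
        ftilde g lW lH lb Z b ≤ ftilde g lW lH lb Z' b') ↔
      (G * V = (-Real.sqrt (lW * lH)) • U ∧
       Gᵀ * U = (-Real.sqrt (lW * lH)) • V ∧
       matOpNorm G ≤ Real.sqrt (lW * lH) ∧
       ∀ k, (∑ j, G k j) + lb * b k = 0) := by
  classical
  set X : Matrix (Fin K) (Fin N) ℝ := Z + Matrix.of fun i' _ => b i' with hXdef
  set sl := Real.sqrt (lW * lH) with hsl
  have hslpos : 0 < sl := Real.sqrt_pos.2 (mul_pos hlW hlH)
  have hft : ∀ (Z₁ : Matrix (Fin K) (Fin N) ℝ) (b₁ : Fin K → ℝ),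
      ftilde g lW lH lb Z₁ b₁
        = g (Z₁ + Matrix.of fun i' _ => b₁ i') + sl * nuclearNorm Z₁
          + lb / 2 * ∑ i, (b₁ i)^2 := fun _ _ => rfl
  have hfd : ∀ D, fderiv ℝ g X D = ip G D := by
    intro D
    rw [clm_expand (fderiv ℝ g X) D]
    unfold ip
    refine Finset.sum_congr rfl fun k _ => Finset.sum_congr rfl fun j _ => ?_
    rw [← hG k j]
    ring
  have hσ' : ∀ i, 0 ≤ σ i := fun i => (hσ i).le
  have hnnZ : nuclearNorm Z = ∑ i, σ i := by rw [hZ]; exact nn_svd hU hV hσ'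
  have hUcol : ∀ i, ‖colE U i‖ = 1 := fun i => norm_colE hU i
  have hVcol : ∀ i, ‖colE V i‖ = 1 := fun i => norm_colE hV i
  have hUU : ∀ i, (inner ℝ (colE U i) (colE U i) : ℝ) = 1 := by
    intro i; rw [real_inner_self_eq_norm_mul_norm, hUcol, mul_one]
  have hVV : ∀ i, (inner ℝ (colE V i) (colE V i) : ℝ) = 1 := by
    intro i; rw [real_inner_self_eq_norm_mul_norm, hVcol, mul_one]
  constructor
  · intro hmin
    -- subgradient inequality
    have subgrad : ∀ A : Matrix (Fin K) (Fin N) ℝ,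
        sl * (nuclearNorm Z - nuclearNorm A) ≤ ip G A - ip G Z := by
      intro A
      have hd : HasDerivAt (fun t : ℝ => g (X + t • (A - Z))) (ip G (A - Z)) 0 := by
        have h5 := hasDerivAt_path hgdiff X (A - Z)
        rw [hfd] at h5; exact h5
      have hsec : ∀ t ∈ Set.Ioc (0:ℝ) 1,
          (sl * (nuclearNorm Z - nuclearNorm A)) * t
            ≤ (fun t : ℝ => g (X + t • (A - Z))) t
              - (fun t : ℝ => g (X + t • (A - Z))) 0 := by
        intro t ht
        simp only
        have h0 : X + (0:ℝ) • (A - Z) = X := by simp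
        rw [h0]
        have hmin' := hmin (Z + t • (A - Z)) b
        rw [hft Z b, hft (Z + t • (A - Z)) b] at hmin'
        have harg : (Z + t • (A - Z)) + (Matrix.of fun i' _ => b i') = X + t • (A - Z) := by
          rw [hXdef]; abel
        rw [harg] at hmin'
        have hcombo : Z + t • (A - Z) = (1 - t) • Z + t • A := by
          ext k j
          simp only [Matrix.add_apply, Matrix.smul_apply, Matrix.sub_apply, smul_eq_mul]
          ring
        have hnn : nuclearNorm (Z + t • (A - Z))
            ≤ (1 - t) * nuclearNorm Z + t * nuclearNorm A := by
          rw [hcombo]; exact nn_combo ht.1.le ht.2 Z A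
        have hb2 : sl * nuclearNorm (Z + t • (A - Z))
            ≤ sl * ((1 - t) * nuclearNorm Z + t * nuclearNorm A) :=
          mul_le_mul_of_nonneg_left hnn hslpos.le
        have he : sl * ((1 - t) * nuclearNorm Z + t * nuclearNorm A)
            = sl * nuclearNorm Z - sl * (nuclearNorm Z - nuclearNorm A) * t := by ring
        rw [he] at hb2
        linarith
      have := deriv_ge_of_secant hd hsec
      rw [ip_sub_right] at this
      exact this
    -- value of the pairing at Z
    have hipG0 := subgrad 0
    rw [nn_zero, ip_zero_right] at hipG0
    have h2Z := subgrad ((2:ℝ) • Z)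
    rw [nn_smul (by norm_num : (0:ℝ) ≤ 2) Z, ip_smul_right] at h2Z
    have e1 : sl * (nuclearNorm Z - 0) = sl * nuclearNorm Z := by ring
    rw [e1] at hipG0
    have e2 : sl * (nuclearNorm Z - 2 * nuclearNorm Z) = -(sl * nuclearNorm Z) := by ring
    rw [e2] at h2Z
    have hipGZ : ip G Z = -(sl * nuclearNorm Z) := by linarith
    -- dual bound
    have hdualG : ∀ A : Matrix (Fin K) (Fin N) ℝ, -(ip G A) ≤ sl * nuclearNorm A := by
      intro A
      have h5 := subgrad A
      linarith [hipGZ]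
    have hpair : ∀ (x : EuclideanSpace ℝ (Fin K)) (y : EuclideanSpace ℝ (Fin N)),
        -(inner ℝ x (em G y) : ℝ) ≤ sl * (‖x‖ * ‖y‖) := by
      intro x y
      have h5 := hdualG (Matrix.of fun k j => x k * y j)
      rw [ip_rank_one] at h5
      have h6 := nn_rank_one_le x y
      nlinarith [hslpos.le]
    have hpair' : ∀ (x : EuclideanSpace ℝ (Fin K)) (y : EuclideanSpace ℝ (Fin N)),
        (inner ℝ x (em G y) : ℝ) ≤ sl * (‖x‖ * ‖y‖) := by
      intro x y
      have h5 := hpair (-x) y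
      rw [inner_neg_left, norm_neg] at h5
      simp only [neg_neg] at h5
      exact_mod_cast h5
    have hopG : matOpNorm G ≤ sl := by
      refine matOpNorm_le hslpos.le fun y => ?_
      have h5 := hpair' (em G y) y
      have h6 : (inner ℝ (em G y) (em G y) : ℝ) = ‖em G y‖ * ‖em G y‖ :=
        real_inner_self_eq_norm_mul_norm _
      rcases eq_or_lt_of_le (norm_nonneg (em G y)) with h7 | h7
      · rw [← h7]; positivity
      · nlinarith
    -- the trace identity at the SVD
    have hipsvd : ∑ i, σ i * (inner ℝ (colE U i) (em G (colE V i)) : ℝ)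
        = -(sl * ∑ i, σ i) := by
      have h5 := ip_svd G U V σ
      rw [← hZ] at h5
      rw [← h5, hipGZ, hnnZ]
    have hnormGv : ∀ i, ‖em G (colE V i)‖ ≤ sl := by
      intro i
      calc ‖em G (colE V i)‖ ≤ matOpNorm G * ‖colE V i‖ := norm_em_le _ _
        _ = matOpNorm G := by rw [hVcol, mul_one]
        _ ≤ sl := hopG
    have htneg : ∀ i, (inner ℝ (colE U i) (em G (colE V i)) : ℝ) = -sl := by
      have hnonneg : ∀ i ∈ Finset.univ,
          0 ≤ σ i * ((inner ℝ (colE U i) (em G (colE V i)) : ℝ) + sl) := by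
        intro i _
        have h5 : -(inner ℝ (colE U i) (em G (colE V i)) : ℝ)
            ≤ ‖colE U i‖ * ‖em G (colE V i)‖ := by
          have h6 := real_inner_le_norm (-(colE U i)) (em G (colE V i))
          rw [inner_neg_left, norm_neg] at h6
          exact_mod_cast h6
        rw [hUcol, one_mul] at h5
        have h7 := hnormGv i
        refine mul_nonneg (hσ' i) ?_
        linarith
      have hsumzero : ∑ i, σ i * ((inner ℝ (colE U i) (em G (colE V i)) : ℝ) + sl) = 0 := by
        simp only [mul_add]
        rw [Finset.sum_add_distrib, hipsvd, ← Finset.sum_mul]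
        ring
      intro i
      have h5 := (Finset.sum_eq_zero_iff_of_nonneg hnonneg).1 hsumzero i (Finset.mem_univ i)
      rcases mul_eq_zero.1 h5 with h6 | h6
      · exact absurd h6 (ne_of_gt (hσ i))
      · linarith
    have hGVvec : ∀ i, em G (colE V i) = (-sl) • colE U i := by
      intro i
      have hin : (inner ℝ (colE U i) (em G (colE V i)) : ℝ) = -sl := htneg i
      have hnw : ‖em G (colE V i)‖ ≤ sl := hnormGv i
      have hz : (inner ℝ (em G (colE V i) + sl • colE U i)
          (em G (colE V i) + sl • colE U i) : ℝ) ≤ 0 := by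
        rw [real_inner_add_add_self, real_inner_smul_right, real_inner_smul_left,
          real_inner_smul_right, hUU i]
        have h6 : (inner ℝ (em G (colE V i)) (colE U i) : ℝ) = -sl := by
          rw [real_inner_comm]; exact hin
        rw [h6]
        have h7 : (inner ℝ (em G (colE V i)) (em G (colE V i)) : ℝ)
            = ‖em G (colE V i)‖ * ‖em G (colE V i)‖ := real_inner_self_eq_norm_mul_norm _
        rw [h7]
        nlinarith [norm_nonneg (em G (colE V i))]
      have hz2 : em G (colE V i) + sl • colE U i = 0 := real_inner_self_nonpos.1 hz
      have := eq_neg_of_add_eq_zero_left hz2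
      rw [this, neg_smul]
    have hGV : G * V = (-sl) • U := by
      ext k i
      have hk : em G (colE V i) k = ((-sl) • colE U i) k := by rw [hGVvec]
      rw [em_apply] at hk
      have h5 : ∑ j, G k j * colE V i j = (G * V) k i := by
        rw [Matrix.mul_apply]; exact Finset.sum_congr rfl fun j _ => rfl
      rw [h5] at hk
      rw [hk, Matrix.smul_apply, smul_eq_mul]
      rfl
    -- transpose direction
    have hnormGt : ∀ x : EuclideanSpace ℝ (Fin K), ‖em Gᵀ x‖ ≤ sl * ‖x‖ := by
      intro x
      have h5 : (inner ℝ (em Gᵀ x) (em Gᵀ x) : ℝ) = inner ℝ x (em G (em Gᵀ x)) :=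
        inner_em_transpose G x (em Gᵀ x)
      have h6 := hpair' x (em Gᵀ x)
      have h7 : (inner ℝ (em Gᵀ x) (em Gᵀ x) : ℝ) = ‖em Gᵀ x‖ * ‖em Gᵀ x‖ :=
        real_inner_self_eq_norm_mul_norm _
      rcases eq_or_lt_of_le (norm_nonneg (em Gᵀ x)) with h8 | h8
      · rw [← h8]; positivity
      · have h9 : ‖em Gᵀ x‖ * ‖em Gᵀ x‖ ≤ sl * ‖x‖ * ‖em Gᵀ x‖ := by
          rw [← h7, h5]
          calc (inner ℝ x (em G (em Gᵀ x)) : ℝ) ≤ sl * (‖x‖ * ‖em Gᵀ x‖) := h6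
            _ = sl * ‖x‖ * ‖em Gᵀ x‖ := by ring
        exact le_of_mul_le_mul_right h9 h8
    have hGtvec : ∀ i, em Gᵀ (colE U i) = (-sl) • colE V i := by
      intro i
      have hin : (inner ℝ (em Gᵀ (colE U i)) (colE V i) : ℝ) = -sl := by
        rw [inner_em_transpose]
        exact htneg i
      have hnw : ‖em Gᵀ (colE U i)‖ ≤ sl := by
        have := hnormGt (colE U i)
        rw [hUcol, mul_one] at this
        exact this
      have hz : (inner ℝ (em Gᵀ (colE U i) + sl • colE V i)
          (em Gᵀ (colE U i) + sl • colE V i) : ℝ) ≤ 0 := by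
        rw [real_inner_add_add_self, real_inner_smul_right, real_inner_smul_left,
          real_inner_smul_right, hVV i, hin]
        have h7 : (inner ℝ (em Gᵀ (colE U i)) (em Gᵀ (colE U i)) : ℝ)
            = ‖em Gᵀ (colE U i)‖ * ‖em Gᵀ (colE U i)‖ := real_inner_self_eq_norm_mul_norm _
        rw [h7]
        nlinarith [norm_nonneg (em Gᵀ (colE U i))]
      have hz2 : em Gᵀ (colE U i) + sl • colE V i = 0 := real_inner_self_nonpos.1 hz
      have := eq_neg_of_add_eq_zero_left hz2
      rw [this, neg_smul]
    have hGtU : Gᵀ * U = (-sl) • V := by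
      ext j i
      have hk : em Gᵀ (colE U i) j = ((-sl) • colE V i) j := by rw [hGtvec]
      rw [em_apply] at hk
      have h5 : ∑ k, Gᵀ j k * colE U i k = (Gᵀ * U) j i := by
        rw [Matrix.mul_apply]; exact Finset.sum_congr rfl fun k _ => rfl
      rw [h5] at hk
      rw [hk, Matrix.smul_apply, smul_eq_mul]
      rfl
    -- b condition
    have hbcond : ∀ k, (∑ j, G k j) + lb * b k = 0 := by
      intro k
      set s : Fin K → ℝ := Pi.single k 1 with hsdef
      set Ek : Matrix (Fin K) (Fin N) ℝ := Matrix.of fun i _ => s i with hEkdef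
      have hpsi : ∀ t : ℝ, ftilde g lW lH lb Z (b + t • s)
          = g (X + t • Ek) + sl * nuclearNorm Z + lb/2 * ∑ i, (b i + t * s i)^2 := by
        intro t
        rw [hft]
        have harg : (Z + Matrix.of fun i' _ => (b + t • s) i') = X + t • Ek := by
          rw [hXdef, hEkdef]
          ext i' j
          simp only [Matrix.add_apply, Matrix.of_apply, Matrix.smul_apply, Pi.add_apply,
            Pi.smul_apply, smul_eq_mul]
          ring
        rw [harg]
        rfl
      have hloc : IsLocalMin (fun t : ℝ => g (X + t • Ek) + sl * nuclearNorm Z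
          + lb/2 * ∑ i, (b i + t * s i)^2) 0 := by
        apply Filter.Eventually.of_forall
        intro t
        have h5 := hmin Z (b + t • s)
        rw [hpsi t] at h5
        have h6 : ftilde g lW lH lb Z b = g (X + (0:ℝ) • Ek) + sl * nuclearNorm Z
            + lb/2 * ∑ i, (b i + 0 * s i)^2 := by
          rw [← hpsi 0]
          congr 1
          ext i
          simp
        rw [h6] at h5
        exact h5
      have hd1 : HasDerivAt (fun t : ℝ => g (X + t • Ek)) (ip G Ek) 0 := by
        have h5 := hasDerivAt_path hgdiff X Ek
        rw [hfd] at h5; exact h5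
      have hd2 : HasDerivAt (fun t : ℝ => lb/2 * ∑ i, (b i + t * s i)^2) (lb * b k) 0 := by
        have hterm : ∀ i : Fin K, HasDerivAt (fun t : ℝ => (b i + t * s i)^2)
            (2 * b i * s i) 0 := by
          intro i
          have h := (((hasDerivAt_id (0:ℝ)).mul_const (s i)).const_add (b i)).pow 2
          have h2 : (↑(2:ℕ) : ℝ) * (b i + id (0:ℝ) * s i)^(2-1) * (1 * s i)
              = 2 * b i * s i := by norm_num
          rw [h2] at h
          exact h
        have hsum : HasDerivAt (fun t : ℝ => ∑ i, (b i + t * s i)^2)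
            (∑ i, 2 * b i * s i) 0 :=
          HasDerivAt.fun_sum (fun i _ => hterm i)
        have h5 := hsum.const_mul (lb/2)
        refine h5.congr_deriv ?_
        rw [hsdef]
        simp only [Pi.single_apply, mul_ite, mul_one, mul_zero,
          Finset.sum_ite_eq', Finset.mem_univ, if_pos]
        ring
      have hd := (hd1.add_const (sl * nuclearNorm Z)).add hd2
      have hzero := hloc.hasDerivAt_eq_zero hd
      have hipEk : ip G Ek = ∑ j, G k j := by
        unfold ip
        rw [hEkdef, hsdef]
        simp only [Matrix.of_apply, Pi.single_apply, ite_mul, one_mul, zero_mul, mul_ite,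
          mul_one, mul_zero]
        rw [Finset.sum_comm]
        simp [Finset.sum_ite_eq']
      rw [hipEk] at hzero
      linarith [hzero]
    exact ⟨hGV, hGtU, hopG, hbcond⟩
  · rintro ⟨h1, h2, h3, h4⟩
    intro Z' b'
    have hA1 : g X + ip G ((Z' + Matrix.of fun i' _ => b' i') - X)
        ≤ g (Z' + Matrix.of fun i' _ => b' i') := by
      have h5 := grad_ineq hgconv hgdiff X (Z' + Matrix.of fun i' _ => b' i')
      rw [hfd] at h5
      exact h5
    have hXsplit : (Z' + Matrix.of fun i' _ => b' i') - X
        = (Z' - Z) + Matrix.of (fun i' _ => b' i' - b i') := by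
      rw [hXdef]; ext k j
      simp only [Matrix.add_apply, Matrix.sub_apply, Matrix.of_apply]
      ring
    have hipb : ip G (Matrix.of fun i' _ => b' i' - b i')
        = -(lb * ∑ k, b k * (b' k - b k)) := by
      unfold ip
      rw [Finset.mul_sum, ← Finset.sum_neg_distrib]
      refine Finset.sum_congr rfl fun k _ => ?_
      have h6 : ∑ j, G k j * (Matrix.of fun i' _ => b' i' - b i') k j
          = (∑ j, G k j) * (b' k - b k) := by
        rw [Finset.sum_mul]
        exact Finset.sum_congr rfl fun j _ => rfl
      rw [h6]
      have h7 : (∑ j, G k j) = -(lb * b k) := by linarith [h4 k]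
      rw [h7]; ring
    have hA3 : -(ip G Z') ≤ sl * nuclearNorm Z' := by
      have h5 := ip_le Z' (-G)
      rw [ip_neg_left, matOpNorm_neg] at h5
      have h6 : matOpNorm G * nuclearNorm Z' ≤ sl * nuclearNorm Z' :=
        mul_le_mul_of_nonneg_right h3 (nn_nonneg _)
      linarith
    have hGVcol : ∀ (i : Fin r) (k : Fin K), em G (colE V i) k = -sl * U k i := by
      intro i k
      rw [em_apply]
      have h5 : ∑ j, G k j * colE V i j = (G * V) k i := by
        rw [Matrix.mul_apply]; exact Finset.sum_congr rfl fun j _ => rfl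
      rw [h5, h1, Matrix.smul_apply, smul_eq_mul]
    have hA4 : ip G Z = -(sl * ∑ i, σ i) := by
      rw [hZ, ip_svd]
      have h5 : ∀ i, (inner ℝ (colE U i) (em G (colE V i)) : ℝ) = -sl := by
        intro i
        rw [inner_eq]
        have h6 : ∀ k, colE U i k * em G (colE V i) k = -sl * (U k i * U k i) := by
          intro k; rw [hGVcol, colE_apply]; ring
        rw [Finset.sum_congr rfl fun k _ => h6 k, ← Finset.mul_sum, col_sq_sum hU, mul_one]
      rw [Finset.sum_congr rfl fun i _ => by rw [h5 i]]
      rw [← Finset.sum_mul]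
      ring
    have hquad : lb/2 * ∑ i, (b i)^2 + lb * ∑ k, b k * (b' k - b k)
        ≤ lb/2 * ∑ i, (b' i)^2 := by
      rw [Finset.mul_sum, Finset.mul_sum, Finset.mul_sum, ← Finset.sum_add_distrib]
      refine Finset.sum_le_sum fun i _ => ?_
      nlinarith [sq_nonneg (b' i - b i), hlb.le]
    rw [hft Z b, hft Z' b']
    rw [hXsplit, ip_add_right, ip_sub_right, hipb] at hA1
    rw [← hXdef, hnnZ]
    linarith [hA1, hA3, hA4, hquad]
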